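/- For every natural number k with k ≥ 12, we have −k²/16 ≤ g(k) ≤ −(k−8)²/72, where g(k) = min{ γ'_s(G) : G is a graph on k vertices }. -/

import Mathlib

open scoped Classical

noncomputable def edgeFin {V : Type*} [Fintype V] (G : SimpleGraph V) : Finset (Sym2 V) :=
  Finset.univ.filter (· ∈ G.edgeSet)

noncomputable def closedNbhd {V : Type*} [Fintype V] (G : SimpleGraph V) (e : Sym2 V) :
    Finset (Sym2 V) :=
  (edgeFin G).filter (fun e' => ∃ v, v ∈ e ∧ v ∈ e')

def IsSEDF {V : Type*} [Fintype V] (G : SimpleGraph V) (f : Sym2 V → ℤ) : Prop :=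
  (∀ e ∈ edgeFin G, f e = 1 ∨ f e = -1) ∧
  ∀ e ∈ edgeFin G, 1 ≤ ∑ e' ∈ closedNbhd G e, f e'

noncomputable def vsum {V : Type*} [Fintype V] (G : SimpleGraph V) (f : Sym2 V → ℤ) (v : V) : ℤ :=
  ∑ e ∈ (edgeFin G).filter (fun e => v ∈ e), f e

noncomputable def gammaS {V : Type*} [Fintype V] (G : SimpleGraph V) : ℤ :=
  sInf {z : ℤ | ∃ f, IsSEDF G f ∧ z = ∑ e ∈ edgeFin G, f e}

def IsLGraph {V : Type*} [Fintype V] (m n : ℕ) (G : SimpleGraph V) : Prop :=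
  Fintype.card V = (n + 1) * (m * n + m + 1) ∧
  ∃ P : Fin (n + 1) → Finset V,
    (∀ v : V, ∃! i, v ∈ P i) ∧
    (∀ i, (P i).card = m * n + m + 1) ∧
    (∀ u ∈ P 0, ∀ v ∈ P 0, u ≠ v → G.Adj u v) ∧
    (∀ i, i ≠ 0 → ∀ u ∈ P i, ∀ v ∈ P i, ¬ G.Adj u v) ∧
    (∀ i, i ≠ 0 → ∀ v ∈ P i, ((P 0).filter (G.Adj v)).card = m) ∧
    (∀ i, i ≠ 0 → ∀ v ∈ P 0, ((P i).filter (G.Adj v)).card = m) ∧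
    (∀ i j, i ≠ 0 → j ≠ 0 → i ≠ j → ∀ u ∈ P i, ∀ v ∈ P j, ¬ G.Adj u v)

def MConnected {V : Type*} [Fintype V] (m : ℕ) (G : SimpleGraph V) : Prop :=
  m < Fintype.card V ∧
  ∀ S : Finset V, S.card < m → (G.induce ((↑S : Set V)ᶜ)).Connected

def IsElementary {V : Type*} (H : SimpleGraph V) : Prop :=
  (∀ v, (H.neighborSet v).ncard ≤ 2) ∧
  ∀ v, (H.neighborSet v).ncard = 1 → ∀ w, H.Adj v w → (H.neighborSet w).ncard = 1

noncomputable def g (k : ℕ) : ℤ :=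
  sInf {z : ℤ | ∃ G : SimpleGraph (Fin k), z = gammaS G}

section General
variable {V : Type*} [Fintype V] {G : SimpleGraph V} {f : Sym2 V → ℤ}

lemma mem_edgeFin {e : Sym2 V} : e ∈ edgeFin G ↔ e ∈ G.edgeSet := by
  simp [edgeFin]

lemma vsum_eq_sum_nbrs (v : V) :
    vsum G f v = ∑ u ∈ G.neighborFinset v, f s(v, u) := by
  classical
  rw [vsum]
  refine Finset.sum_bij' (i := fun e he => Sym2.Mem.other (Finset.mem_filter.mp he).2)
    (j := fun u _ => s(v, u)) ?_ ?_ ?_ ?_ ?_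
  · intro e he
    have h2 := (Finset.mem_filter.mp he).2
    have h1 : e ∈ G.edgeSet := mem_edgeFin.mp (Finset.mem_filter.mp he).1
    have hsp := Sym2.other_spec h2
    rw [SimpleGraph.mem_neighborFinset]
    rw [← hsp] at h1
    exact h1
  · intro u hu
    rw [SimpleGraph.mem_neighborFinset] at hu
    refine Finset.mem_filter.mpr ⟨mem_edgeFin.mpr ?_, ?_⟩
    · exact hu
    · exact Sym2.mem_mk_left v u
  · intro e he
    exact Sym2.other_spec (Finset.mem_filter.mp he).2
  · intro u hu
    exact Sym2.congr_right.mp (Sym2.other_spec _)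
  · intro e he
    rw [Sym2.other_spec (Finset.mem_filter.mp he).2]

lemma card_mem_filter {e : Sym2 V} (he : ¬ e.IsDiag) :
    (Finset.univ.filter (fun v => v ∈ e)).card = 2 := by
  classical
  induction e with
  | _ a b =>
    have hab : a ≠ b := by simpa using he
    have : (Finset.univ.filter (fun v => v ∈ s(a, b))) = {a, b} := by
      ext v; simp [Sym2.mem_iff]
    rw [this, Finset.card_pair hab]

lemma handshake : 2 * (∑ e ∈ edgeFin G, f e) = ∑ v, vsum G f v := by
  classical
  unfold vsum
  have h : ∀ (v : V) (e : Sym2 V), v ∈ (Finset.univ : Finset V) ∧ e ∈ (edgeFin G).filter (fun e => v ∈ e)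
      ↔ v ∈ Finset.univ.filter (fun v => v ∈ e) ∧ e ∈ edgeFin G := by
    intro v e
    simp only [Finset.mem_filter, Finset.mem_univ, true_and]
    tauto
  rw [Finset.sum_comm' h, Finset.mul_sum]
  refine Finset.sum_congr rfl fun e he => ?_
  have hd : ¬ e.IsDiag := by
    have := mem_edgeFin.mp he
    exact (SimpleGraph.not_isDiag_of_mem_edgeSet G this)
  rw [Finset.sum_const, card_mem_filter hd]
  push_cast
  ring

lemma nbhd_sum {u v : V} (huv : G.Adj u v) :
    ∑ e' ∈ closedNbhd G s(u, v), f e' = vsum G f u + vsum G f v - f s(u, v) := by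
  classical
  have hne : u ≠ v := huv.ne
  have hfilt : closedNbhd G s(u, v) =
      (edgeFin G).filter (fun e' => u ∈ e' ∨ v ∈ e') := by
    unfold closedNbhd
    refine Finset.filter_congr fun e' _ => ?_
    constructor
    · rintro ⟨w, hw, hw'⟩
      rcases Sym2.mem_iff.mp hw with rfl | rfl
      · exact Or.inl hw'
      · exact Or.inr hw'
    · rintro (h | h)
      · exact ⟨u, Sym2.mem_mk_left u v, h⟩
      · exact ⟨v, Sym2.mem_mk_right u v, h⟩
  have hinter : (edgeFin G).filter (fun e' => u ∈ e' ∧ v ∈ e') = {s(u, v)} := by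
    ext e'
    simp only [Finset.mem_filter, Finset.mem_singleton]
    constructor
    · rintro ⟨hE, hu, hv⟩
      induction e' with
      | _ a b =>
        rcases Sym2.mem_iff.mp hu with rfl | rfl <;> rcases Sym2.mem_iff.mp hv with rfl | rfl
        · exact absurd rfl hne
        · rfl
        · exact Sym2.eq_swap
        · exact absurd rfl hne.symm
    · rintro rfl
      exact ⟨mem_edgeFin.mpr huv, Sym2.mem_mk_left u v, Sym2.mem_mk_right u v⟩
  have key := Finset.sum_filter_add_sum_filter_not (edgeFin G) (fun e' => u ∈ e') f
  -- inclusion-exclusion via sum over union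
  have h1 : (edgeFin G).filter (fun e' => u ∈ e' ∨ v ∈ e') =
      ((edgeFin G).filter (fun e' => u ∈ e')) ∪ ((edgeFin G).filter (fun e' => v ∈ e')) := by
    rw [← Finset.filter_or]
  have h2 : ((edgeFin G).filter (fun e' => u ∈ e')) ∩ ((edgeFin G).filter (fun e' => v ∈ e')) =
      {s(u, v)} := by
    rw [← Finset.filter_and]; exact hinter
  have := Finset.sum_union_inter (s₁ := (edgeFin G).filter (fun e' => u ∈ e'))
    (s₂ := (edgeFin G).filter (fun e' => v ∈ e')) (f := f)
  rw [h2, Finset.sum_singleton] at this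
  rw [hfilt, h1]
  unfold vsum
  omega

lemma lb {k : ℕ} (G : SimpleGraph (Fin k)) (f : Sym2 (Fin k) → ℤ) (hf : IsSEDF G f) :
    -(k : ℤ)^2 ≤ 16 * ∑ e ∈ edgeFin G, f e := by
  classical
  set d := vsum G f with hd
  have hcond : ∀ u v : Fin k, G.Adj u v → 1 ≤ d u + d v - f s(u, v) := by
    intro u v h
    have h2 := hf.2 s(u, v) (mem_edgeFin.mpr (G.mem_edgeSet.mpr h))
    rwa [nbhd_sum h] at h2
  have hvalge : ∀ u v, G.Adj u v → -1 ≤ f s(u, v) := by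
    intro u v h
    rcases hf.1 _ (mem_edgeFin.mpr (G.mem_edgeSet.mpr h)) with h1 | h1 <;> omega
  have hHS : 2 * (∑ e ∈ edgeFin G, f e) = ∑ v, d v := handshake
  set A : Finset (Fin k) := Finset.univ.filter (fun v => d v < 0) with hA
  have hknn : (0:ℤ) ≤ (k:ℤ)^2 := by positivity
  rcases A.eq_empty_or_nonempty with hAe | hAne
  · have hpos : 0 ≤ ∑ v, d v := by
      refine Finset.sum_nonneg (fun v _ => ?_)
      by_contra h
      push_neg at h
      have hv : v ∈ A := by simp only [hA, Finset.mem_filter, Finset.mem_univ, true_and]; omega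
      rw [hAe] at hv
      exact absurd hv (Finset.notMem_empty v)
    omega
  · obtain ⟨v0, hv0A, hv0min⟩ := A.exists_min_image d hAne
    have hv0neg : d v0 < 0 := (Finset.mem_filter.mp hv0A).2
    set a : ℤ := -d v0 with ha
    have ha1 : 1 ≤ a := by omega
    set Nb := G.neighborFinset v0 with hNb
    have hnbr : ∀ u ∈ Nb, a ≤ d u := by
      intro u hu
      have hadj : G.Adj v0 u := (G.mem_neighborFinset v0 u).mp hu
      have h1 := hcond v0 u hadj
      have h2 := hvalge v0 u hadj
      omega
    have hdv0 : d v0 = ∑ u ∈ Nb, f s(v0, u) := vsum_eq_sum_nbrs v0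
    have hcard : a ≤ (Nb.card : ℤ) := by
      have h1 : -(Nb.card : ℤ) ≤ d v0 := by
        rw [hdv0]
        calc -(Nb.card : ℤ) = ∑ _u ∈ Nb, (-1 : ℤ) := by simp
        _ ≤ _ := Finset.sum_le_sum
            (fun u hu => hvalge v0 u ((G.mem_neighborFinset v0 u).mp hu))
      omega
    have hNbA : ∀ u ∈ Nb, u ∉ A := by
      intro u hu h
      have h1 := (Finset.mem_filter.mp h).2
      have h2 := hnbr u hu
      omega
    have hdisj : Disjoint Nb A := Finset.disjoint_left.mpr hNbA
    have hcards : Nb.card + A.card ≤ k := by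
      calc Nb.card + A.card = (Nb ∪ A).card := (Finset.card_union_of_disjoint hdisj).symm
      _ ≤ Fintype.card (Fin k) := Finset.card_le_univ _
      _ = k := by simp
    set t : ℤ := (A.card : ℤ) with ht
    have htnn : 0 ≤ t := by positivity
    have hsumA : -(t * a) ≤ ∑ v ∈ A, d v := by
      calc -(t * a) = ∑ _v ∈ A, (-a) := by rw [Finset.sum_const]; push_cast; ring
      _ ≤ _ := Finset.sum_le_sum fun v hv => by have := hv0min v hv; omega
    have hposC : ∀ v ∈ Finset.univ \ A, 0 ≤ d v := by
      intro v hv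
      have h1 := (Finset.mem_sdiff.mp hv).2
      simp only [hA, Finset.mem_filter, Finset.mem_univ, true_and, not_lt] at h1
      omega
    have hNbsub : Nb ⊆ Finset.univ \ A := fun u hu =>
      Finset.mem_sdiff.mpr ⟨Finset.mem_univ _, hNbA u hu⟩
    have hsumC : a * (Nb.card : ℤ) ≤ ∑ v ∈ Finset.univ \ A, d v := by
      calc (a * (Nb.card : ℤ)) = ∑ _u ∈ Nb, a := by rw [Finset.sum_const]; push_cast; ring
      _ ≤ ∑ u ∈ Nb, d u := Finset.sum_le_sum hnbr
      _ ≤ _ := Finset.sum_le_sum_of_subset_of_nonneg hNbsub (fun v hv _ => hposC v hv)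
    have hsplit : ∑ v ∈ Finset.univ \ A, d v + ∑ v ∈ A, d v = ∑ v, d v :=
      Finset.sum_sdiff (Finset.subset_univ A)
    have htk : t + a ≤ (k : ℤ) := by
      have h1 : ((Nb.card + A.card : ℕ) : ℤ) ≤ (k : ℤ) := by exact_mod_cast hcards
      push_cast at h1
      omega
    have key : a * a - t * a ≤ ∑ v, d v := by
      have h1 : a * a ≤ a * (Nb.card : ℤ) := by nlinarith
      omega
    nlinarith [sq_nonneg (3 * a - t), sq_nonneg ((k : ℤ) - a - t),
      mul_nonneg (by omega : (0:ℤ) ≤ (k:ℤ) - a - t) (by omega : (0:ℤ) ≤ a + t)]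

end General

section Constr
variable (m r : ℕ)

abbrev Nn : ℕ := 3 * m + 1

abbrev W : Type := (Fin 3 × ZMod (Nn m)) ⊕ Fin r

instance : NeZero (Nn m) := ⟨Nat.succ_ne_zero _⟩

def MyRel : W m r → W m r → Prop := fun w w' =>
  match w, w' with
  | .inl (i, x), .inl (j, y) =>
      (i = 0 ∧ j = 0 ∧ x ≠ y) ∨
      (i = 0 ∧ j = 1 ∧ (x - y).val < m) ∨ (j = 0 ∧ i = 1 ∧ (y - x).val < m) ∨
      (i = 0 ∧ j = 2 ∧ m ≤ (x - y).val ∧ (x - y).val < 2 * m) ∨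
      (j = 0 ∧ i = 2 ∧ m ≤ (y - x).val ∧ (y - x).val < 2 * m)
  | _, _ => False

def Gm : SimpleGraph (W m r) where
  Adj := MyRel m r
  symm := by
    constructor
    rintro (⟨i, x⟩ | t) (⟨j, y⟩ | t') h <;> simp only [MyRel] at h ⊢ <;> tauto
  loopless := by
    constructor
    rintro (⟨i, x⟩ | t) h <;> simp only [MyRel] at h
    rcases h with ⟨_, _, h⟩ | ⟨h1, h2, _⟩ | ⟨h1, h2, _⟩ | ⟨h1, h2, _⟩ | ⟨h1, h2, _⟩
    · exact h rfl
    all_goals (rw [h1] at h2; exact absurd h2 (by decide))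

lemma card_band (lo hi : ℕ) (hhi : hi ≤ Nn m) (y : ZMod (Nn m)) :
    (Finset.univ.filter fun x : ZMod (Nn m) => lo ≤ (x - y).val ∧ (x - y).val < hi).card
      = hi - lo := by
  rw [← Nat.card_Ico lo hi]
  refine Finset.card_nbij' (fun x => (x - y).val) (fun n => (n : ZMod (Nn m)) + y) ?_ ?_ ?_ ?_
  · intro x hx
    simp only [Finset.mem_coe, Finset.mem_filter] at hx
    exact Finset.mem_Ico.mpr ⟨hx.2.1, hx.2.2⟩
  · intro n hn
    have hn' := Finset.mem_Ico.mp hn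
    have hv : ((n : ZMod (Nn m)) + y - y) = (n : ZMod (Nn m)) := by ring
    simp only [Finset.mem_coe, Finset.mem_filter, Finset.mem_univ, true_and, hv,
      ZMod.val_cast_of_lt (lt_of_lt_of_le hn'.2 hhi)]
    exact hn'
  · intro x _
    simp only
    rw [ZMod.natCast_rightInverse (x - y)]
    ring
  · intro n hn
    have hn' := Finset.mem_Ico.mp hn
    simp only
    rw [(by ring : (n : ZMod (Nn m)) + y - y = (n : ZMod (Nn m))),
      ZMod.val_cast_of_lt (lt_of_lt_of_le hn'.2 hhi)]


lemma card_band' (lo hi : ℕ) (hhi : hi ≤ Nn m) (y : ZMod (Nn m)) :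
    (Finset.univ.filter fun x : ZMod (Nn m) => lo ≤ (y - x).val ∧ (y - x).val < hi).card
      = hi - lo := by
  rw [← Nat.card_Ico lo hi]
  refine Finset.card_nbij' (fun x => (y - x).val) (fun n => y - (n : ZMod (Nn m))) ?_ ?_ ?_ ?_
  · intro x hx
    simp only [Finset.mem_coe, Finset.mem_filter] at hx
    exact Finset.mem_Ico.mpr ⟨hx.2.1, hx.2.2⟩
  · intro n hn
    have hn' := Finset.mem_Ico.mp hn
    have hv : (y - (y - (n : ZMod (Nn m)))) = (n : ZMod (Nn m)) := by ring
    simp only [Finset.mem_coe, Finset.mem_filter, Finset.mem_univ, true_and, hv,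
      ZMod.val_cast_of_lt (lt_of_lt_of_le hn'.2 hhi)]
    exact hn'
  · intro x _
    simp only
    rw [ZMod.natCast_rightInverse (y - x)]
    ring
  · intro n hn
    have hn' := Finset.mem_Ico.mp hn
    simp only
    rw [(by ring : y - (y - (n : ZMod (Nn m))) = (n : ZMod (Nn m))),
      ZMod.val_cast_of_lt (lt_of_lt_of_le hn'.2 hhi)]

def isCl : W m r → Prop := fun w => ∃ x, w = Sum.inl ((0 : Fin 3), x)

noncomputable def fW : Sym2 (W m r) → ℤ := fun e => if ∀ w ∈ e, isCl m r w then 1 else -1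

lemma fW_pair (a b : W m r) :
    fW m r s(a, b) = if isCl m r a ∧ isCl m r b then 1 else -1 := by
  unfold fW
  congr 1
  simp [Sym2.mem_iff, or_imp, forall_and]

lemma Gm_adj : (Gm m r).Adj = MyRel m r := rfl

lemma adj00 (x y : ZMod (Nn m)) :
    (Gm m r).Adj (Sum.inl (0, x)) (Sum.inl (0, y)) ↔ ¬ x = y := by
  rw [Gm_adj]; simp [MyRel]

lemma adj01 (x y : ZMod (Nn m)) :
    (Gm m r).Adj (Sum.inl (0, x)) (Sum.inl (1, y)) ↔ 0 ≤ (x - y).val ∧ (x - y).val < m := by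
  rw [Gm_adj]; simp [MyRel]

lemma adj02 (x y : ZMod (Nn m)) :
    (Gm m r).Adj (Sum.inl (0, x)) (Sum.inl (2, y)) ↔ m ≤ (x - y).val ∧ (x - y).val < 2 * m := by
  rw [Gm_adj]; simp [MyRel]

lemma adj1 (x y : ZMod (Nn m)) (j : Fin 3) :
    (Gm m r).Adj (Sum.inl (1, x)) (Sum.inl (j, y)) ↔ j = 0 ∧ (y - x).val < m := by
  rw [Gm_adj]; simp [MyRel]

lemma adj2 (x y : ZMod (Nn m)) (j : Fin 3) :
    (Gm m r).Adj (Sum.inl (2, x)) (Sum.inl (j, y)) ↔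
      j = 0 ∧ m ≤ (y - x).val ∧ (y - x).val < 2 * m := by
  rw [Gm_adj]; simp [MyRel]

lemma adj_inl_inr (w : W m r) (t : Fin r) : ¬ (Gm m r).Adj w (Sum.inr t) := by
  rw [Gm_adj]; rcases w with ⟨j, y⟩ | t' <;> simp [MyRel]

lemma adj_inr (t : Fin r) (w : W m r) : ¬ (Gm m r).Adj (Sum.inr t) w := by
  rw [Gm_adj]; rcases w with ⟨j, y⟩ | t' <;> simp [MyRel]

lemma sum_ite_count {α : Type*} [Fintype α] (P : α → Prop) [DecidablePred P] (c : ℤ) :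
    ∑ y : α, (if P y then c else 0) = ((Finset.univ.filter P).card : ℤ) * c := by
  rw [← Finset.sum_filter, Finset.sum_const, nsmul_eq_mul]

lemma vsum_eq_sum_ite {V : Type*} [Fintype V] (G : SimpleGraph V) (f : Sym2 V → ℤ) (v : V) :
    vsum G f v = ∑ u : V, if G.Adj v u then f s(v, u) else 0 := by
  classical
  rw [vsum_eq_sum_nbrs, ← Finset.sum_filter]
  apply Finset.sum_congr _ (fun _ _ => rfl)
  ext u
  simp [SimpleGraph.mem_neighborFinset]

lemma not_isCl_one (y : ZMod (Nn m)) : ¬ isCl m r (Sum.inl (1, y)) := by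
  rintro ⟨x, hx⟩
  simp only [Sum.inl.injEq, Prod.mk.injEq] at hx
  exact absurd hx.1 (by decide)

lemma not_isCl_two (y : ZMod (Nn m)) : ¬ isCl m r (Sum.inl (2, y)) := by
  rintro ⟨x, hx⟩
  simp only [Sum.inl.injEq, Prod.mk.injEq] at hx
  exact absurd hx.1 (by decide)

lemma isCl_zero (y : ZMod (Nn m)) : isCl m r (Sum.inl (0, y)) := ⟨y, rfl⟩

lemma fW_00 (x y : ZMod (Nn m)) : fW m r s(Sum.inl (0, x), Sum.inl (0, y)) = 1 := by
  rw [fW_pair]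
  exact if_pos ⟨isCl_zero m r x, isCl_zero m r y⟩

lemma fW_01 (x y : ZMod (Nn m)) : fW m r s(Sum.inl (0, x), Sum.inl (1, y)) = -1 := by
  rw [fW_pair]
  exact if_neg (fun h => not_isCl_one m r y h.2)

lemma fW_02 (x y : ZMod (Nn m)) : fW m r s(Sum.inl (0, x), Sum.inl (2, y)) = -1 := by
  rw [fW_pair]
  exact if_neg (fun h => not_isCl_two m r y h.2)

lemma fW_10 (x y : ZMod (Nn m)) : fW m r s(Sum.inl (1, x), Sum.inl (0, y)) = -1 := by
  rw [fW_pair]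
  exact if_neg (fun h => not_isCl_one m r x h.1)

lemma fW_20 (x y : ZMod (Nn m)) : fW m r s(Sum.inl (2, x), Sum.inl (0, y)) = -1 := by
  rw [fW_pair]
  exact if_neg (fun h => not_isCl_two m r x h.1)

lemma vsum_cl (x : ZMod (Nn m)) :
    vsum (Gm m r) (fW m r) (Sum.inl (0, x)) = m := by
  rw [vsum_eq_sum_ite, Fintype.sum_sum_type]
  have h2 : ∑ t : Fin r, (if (Gm m r).Adj (Sum.inl (0, x)) (Sum.inr t)
      then fW m r s(Sum.inl (0, x), Sum.inr t) else 0) = 0 :=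
    Finset.sum_eq_zero (fun t _ => if_neg (adj_inl_inr m r _ t))
  rw [h2, add_zero, Fintype.sum_prod_type, Fin.sum_univ_three]
  have e0 : ∑ y : ZMod (Nn m), (if (Gm m r).Adj (Sum.inl (0, x)) (Sum.inl (0, y))
      then fW m r s(Sum.inl (0, x), Sum.inl (0, y)) else 0)
      = ((Nn m : ℤ) - 1) := by
    have h : ∀ y : ZMod (Nn m), (if (Gm m r).Adj (Sum.inl (0, x)) (Sum.inl (0, y))
        then fW m r s(Sum.inl (0, x), Sum.inl ((0 : Fin 3), y)) else 0)
        = (if ¬ x = y then (1 : ℤ) else 0) := by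
      intro y
      rw [fW_00]
      exact if_congr (adj00 m r x y) rfl rfl
    rw [Finset.sum_congr rfl (fun y _ => h y), sum_ite_count]
    have hc : (Finset.univ.filter (fun y : ZMod (Nn m) => ¬ x = y)) = Finset.univ.erase x := by
      ext y
      simp [eq_comm]
    rw [hc, Finset.card_erase_of_mem (Finset.mem_univ _), Finset.card_univ, ZMod.card]
    have hN : 1 ≤ Nn m := by unfold Nn; omega
    push_cast [Nat.cast_sub hN]
    ring
  have e1 : ∑ y : ZMod (Nn m), (if (Gm m r).Adj (Sum.inl (0, x)) (Sum.inl (1, y))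
      then fW m r s(Sum.inl (0, x), Sum.inl (1, y)) else 0)
      = -(m : ℤ) := by
    have h : ∀ y : ZMod (Nn m), (if (Gm m r).Adj (Sum.inl (0, x)) (Sum.inl (1, y))
        then fW m r s(Sum.inl (0, x), Sum.inl ((1 : Fin 3), y)) else 0)
        = (if 0 ≤ (x - y).val ∧ (x - y).val < m then (-1 : ℤ) else 0) := by
      intro y
      rw [fW_01]
      exact if_congr (adj01 m r x y) rfl rfl
    rw [Finset.sum_congr rfl (fun y _ => h y), sum_ite_count,
      card_band' m 0 m (by unfold Nn; omega) x, Nat.sub_zero]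
    push_cast
    ring
  have e2 : ∑ y : ZMod (Nn m), (if (Gm m r).Adj (Sum.inl (0, x)) (Sum.inl (2, y))
      then fW m r s(Sum.inl (0, x), Sum.inl (2, y)) else 0)
      = -(m : ℤ) := by
    have h : ∀ y : ZMod (Nn m), (if (Gm m r).Adj (Sum.inl (0, x)) (Sum.inl (2, y))
        then fW m r s(Sum.inl (0, x), Sum.inl ((2 : Fin 3), y)) else 0)
        = (if m ≤ (x - y).val ∧ (x - y).val < 2 * m then (-1 : ℤ) else 0) := by
      intro y
      rw [fW_02]
      exact if_congr (adj02 m r x y) rfl rfl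
    rw [Finset.sum_congr rfl (fun y _ => h y), sum_ite_count,
      card_band' m m (2 * m) (by unfold Nn; omega) x]
    have h2m : (2 * m - m : ℕ) = m := by omega
    rw [h2m]
    push_cast
    ring
  rw [e0, e1, e2]
  unfold Nn
  push_cast
  ring

lemma vsum_p1 (x : ZMod (Nn m)) :
    vsum (Gm m r) (fW m r) (Sum.inl (1, x)) = -(m : ℤ) := by
  rw [vsum_eq_sum_ite, Fintype.sum_sum_type]
  have h2 : ∑ t : Fin r, (if (Gm m r).Adj (Sum.inl (1, x)) (Sum.inr t)
      then fW m r s(Sum.inl (1, x), Sum.inr t) else 0) = 0 :=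
    Finset.sum_eq_zero (fun t _ => if_neg (adj_inl_inr m r _ t))
  rw [h2, add_zero, Fintype.sum_prod_type, Fin.sum_univ_three]
  have e0 : ∑ y : ZMod (Nn m), (if (Gm m r).Adj (Sum.inl (1, x)) (Sum.inl (0, y))
      then fW m r s(Sum.inl (1, x), Sum.inl (0, y)) else 0)
      = -(m : ℤ) := by
    have h : ∀ y : ZMod (Nn m), (if (Gm m r).Adj (Sum.inl (1, x)) (Sum.inl (0, y))
        then fW m r s(Sum.inl (1, x), Sum.inl ((0 : Fin 3), y)) else 0)
        = (if 0 ≤ (y - x).val ∧ (y - x).val < m then (-1 : ℤ) else 0) := by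
      intro y
      rw [fW_10]
      refine if_congr ?_ rfl rfl
      rw [adj1]
      simp
    rw [Finset.sum_congr rfl (fun y _ => h y), sum_ite_count,
      card_band m 0 m (by unfold Nn; omega) x, Nat.sub_zero]
    push_cast
    ring
  have e1 : ∑ y : ZMod (Nn m), (if (Gm m r).Adj (Sum.inl (1, x)) (Sum.inl (1, y))
      then fW m r s(Sum.inl (1, x), Sum.inl (1, y)) else 0) = 0 := by
    refine Finset.sum_eq_zero (fun y _ => if_neg ?_)
    rw [adj1]
    simp
  have e2 : ∑ y : ZMod (Nn m), (if (Gm m r).Adj (Sum.inl (1, x)) (Sum.inl (2, y))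
      then fW m r s(Sum.inl (1, x), Sum.inl (2, y)) else 0) = 0 := by
    refine Finset.sum_eq_zero (fun y _ => if_neg ?_)
    rw [adj1]
    simp
  rw [e0, e1, e2]
  ring

lemma vsum_p2 (x : ZMod (Nn m)) :
    vsum (Gm m r) (fW m r) (Sum.inl (2, x)) = -(m : ℤ) := by
  rw [vsum_eq_sum_ite, Fintype.sum_sum_type]
  have h2 : ∑ t : Fin r, (if (Gm m r).Adj (Sum.inl (2, x)) (Sum.inr t)
      then fW m r s(Sum.inl (2, x), Sum.inr t) else 0) = 0 :=
    Finset.sum_eq_zero (fun t _ => if_neg (adj_inl_inr m r _ t))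
  rw [h2, add_zero, Fintype.sum_prod_type, Fin.sum_univ_three]
  have e0 : ∑ y : ZMod (Nn m), (if (Gm m r).Adj (Sum.inl (2, x)) (Sum.inl (0, y))
      then fW m r s(Sum.inl (2, x), Sum.inl (0, y)) else 0)
      = -(m : ℤ) := by
    have h : ∀ y : ZMod (Nn m), (if (Gm m r).Adj (Sum.inl (2, x)) (Sum.inl (0, y))
        then fW m r s(Sum.inl (2, x), Sum.inl ((0 : Fin 3), y)) else 0)
        = (if m ≤ (y - x).val ∧ (y - x).val < 2 * m then (-1 : ℤ) else 0) := by
      intro y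
      rw [fW_20]
      refine if_congr ?_ rfl rfl
      rw [adj2]
      simp
    rw [Finset.sum_congr rfl (fun y _ => h y), sum_ite_count,
      card_band m m (2 * m) (by unfold Nn; omega) x]
    have h2m : (2 * m - m : ℕ) = m := by omega
    rw [h2m]
    push_cast
    ring
  have e1 : ∑ y : ZMod (Nn m), (if (Gm m r).Adj (Sum.inl (2, x)) (Sum.inl (1, y))
      then fW m r s(Sum.inl (2, x), Sum.inl (1, y)) else 0) = 0 := by
    refine Finset.sum_eq_zero (fun y _ => if_neg ?_)
    rw [adj2]
    simp
  have e2 : ∑ y : ZMod (Nn m), (if (Gm m r).Adj (Sum.inl (2, x)) (Sum.inl (2, y))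
      then fW m r s(Sum.inl (2, x), Sum.inl (2, y)) else 0) = 0 := by
    refine Finset.sum_eq_zero (fun y _ => if_neg ?_)
    rw [adj2]
    simp
  rw [e0, e1, e2]
  ring

lemma vsum_isol (t : Fin r) : vsum (Gm m r) (fW m r) (Sum.inr t) = 0 := by
  rw [vsum_eq_sum_ite]
  exact Finset.sum_eq_zero (fun u _ => if_neg (adj_inr m r t u))

lemma total_sum : 2 * (∑ e ∈ edgeFin (Gm m r), fW m r e) = -((Nn m : ℤ) * m) := by
  rw [handshake, Fintype.sum_sum_type, Fintype.sum_prod_type, Fin.sum_univ_three]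
  rw [Finset.sum_congr rfl (fun y _ => vsum_cl m r y),
    Finset.sum_congr rfl (fun y _ => vsum_p1 m r y),
    Finset.sum_congr rfl (fun y _ => vsum_p2 m r y),
    Finset.sum_congr rfl (fun t _ => vsum_isol m r t)]
  simp only [Finset.sum_const, Finset.card_univ, ZMod.card, nsmul_eq_mul, smul_zero, add_zero]
  push_cast
  ring

lemma sedf_Gm (hm : 1 ≤ m) : IsSEDF (Gm m r) (fW m r) := by
  constructor
  · intro e _
    unfold fW
    split <;> simp
  · intro e he
    induction e with
    | _ u v =>
      have hadj : (Gm m r).Adj u v := (Gm m r).mem_edgeSet.mp (mem_edgeFin.mp he)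
      rw [nbhd_sum hadj]
      rcases u with ⟨i, x⟩ | t
      case inr => exact absurd hadj (adj_inr m r t v)
      rcases v with ⟨j, y⟩ | t
      case inr => exact absurd hadj (adj_inl_inr m r _ t)
      have hrel : MyRel m r (Sum.inl (i, x)) (Sum.inl (j, y)) := by rw [← Gm_adj]; exact hadj
      unfold MyRel at hrel
      rcases hrel with ⟨hi, hj, _⟩ | ⟨hi, hj, _⟩ | ⟨hj, hi, _⟩ | ⟨hi, hj, _⟩ | ⟨hj, hi, _⟩ <;>
        subst hi <;> subst hj
      · rw [vsum_cl, vsum_cl, fW_00]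
        omega
      · rw [vsum_cl, vsum_p1, fW_01]
        omega
      · rw [vsum_p1, vsum_cl, fW_10]
        omega
      · rw [vsum_cl, vsum_p2, fW_02]
        omega
      · rw [vsum_p2, vsum_cl, fW_20]
        omega

end Constr

section Transfer

variable {V V' : Type*} [Fintype V] [Fintype V'] (e : V ≃ V') (G : SimpleGraph V)

lemma sym2_symm_map (d : Sym2 V) : Sym2.map ⇑e.symm (Sym2.map ⇑e d) = d := by
  rw [Sym2.map_map]
  have : ⇑e.symm ∘ ⇑e = id := by
    funext a
    simp
  rw [this, Sym2.map_id, id_eq]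

lemma sym2_map_inj : Function.Injective (Sym2.map ⇑e) :=
  Sym2.map.injective e.injective

lemma mem_edgeFin_map (x : Sym2 V') :
    x ∈ edgeFin (G.map e.toEmbedding) ↔ ∃ d ∈ edgeFin G, Sym2.map ⇑e d = x := by
  constructor
  · intro h
    revert h
    induction x with
    | _ u v =>
      intro h
      rw [mem_edgeFin, SimpleGraph.mem_edgeSet, SimpleGraph.map_adj] at h
      obtain ⟨a, b, hab, ha, hb⟩ := h
      refine ⟨s(a, b), mem_edgeFin.mpr hab, ?_⟩
      rw [Sym2.map_pair_eq]
      simp only [Equiv.toEmbedding_apply] at ha hb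
      rw [ha, hb]
  · rintro ⟨d, hd, rfl⟩
    induction d with
    | _ a b =>
      rw [Sym2.map_pair_eq, mem_edgeFin, SimpleGraph.mem_edgeSet, SimpleGraph.map_adj]
      exact ⟨a, b, (mem_edgeFin.mp hd : _ ∈ G.edgeSet), rfl, rfl⟩

lemma edgeFin_map :
    edgeFin (G.map e.toEmbedding) = (edgeFin G).image (Sym2.map ⇑e) := by
  ext x
  rw [mem_edgeFin_map, Finset.mem_image]

lemma mem_sym2_map_equiv (v : V') (d : Sym2 V) :
    v ∈ Sym2.map ⇑e d ↔ e.symm v ∈ d := by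
  rw [Sym2.mem_map]
  constructor
  · rintro ⟨a, ha, rfl⟩
    simpa using ha
  · intro h
    exact ⟨e.symm v, h, by simp⟩

lemma closedNbhd_map (d0 : Sym2 V) :
    closedNbhd (G.map e.toEmbedding) (Sym2.map ⇑e d0)
      = (closedNbhd G d0).image (Sym2.map ⇑e) := by
  unfold closedNbhd
  rw [edgeFin_map, Finset.filter_image]
  congr 1
  apply Finset.filter_congr
  intro d _
  constructor
  · rintro ⟨v, hv0, hvd⟩
    exact ⟨e.symm v, (mem_sym2_map_equiv e v d0).mp hv0, (mem_sym2_map_equiv e v d).mp hvd⟩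
  · rintro ⟨w, hw0, hwd⟩
    refine ⟨e w, ?_, ?_⟩
    · rw [mem_sym2_map_equiv]
      simpa using hw0
    · rw [mem_sym2_map_equiv]
      simpa using hwd

lemma sum_image_map (f : Sym2 V → ℤ) (s : Finset (Sym2 V)) :
    ∑ x ∈ s.image (Sym2.map ⇑e), f (Sym2.map ⇑e.symm x) = ∑ x ∈ s, f x := by
  rw [Finset.sum_image (fun a _ b _ h => sym2_map_inj e h)]
  exact Finset.sum_congr rfl (fun d _ => by rw [sym2_symm_map])

lemma sedf_map (f : Sym2 V → ℤ) (hf : IsSEDF G f) :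
    IsSEDF (G.map e.toEmbedding) (fun x => f (Sym2.map ⇑e.symm x)) ∧
    ∑ x ∈ edgeFin (G.map e.toEmbedding), f (Sym2.map ⇑e.symm x)
      = ∑ x ∈ edgeFin G, f x := by
  refine ⟨⟨?_, ?_⟩, ?_⟩
  · intro x hx
    obtain ⟨d, hd, rfl⟩ := (mem_edgeFin_map e G x).mp hx
    simp only [sym2_symm_map]
    exact hf.1 d hd
  · intro x hx
    obtain ⟨d, hd, rfl⟩ := (mem_edgeFin_map e G x).mp hx
    rw [closedNbhd_map, sum_image_map]
    exact hf.2 d hd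
  · rw [edgeFin_map, sum_image_map]

end Transfer

section Glue

variable {k : ℕ}

lemma one_sedf {V : Type*} [Fintype V] (G : SimpleGraph V) :
    IsSEDF G (fun _ => 1) := by
  refine ⟨fun e _ => Or.inl rfl, fun e he => ?_⟩
  have hmem : e ∈ closedNbhd G e := by
    unfold closedNbhd
    refine Finset.mem_filter.mpr ⟨he, ?_⟩
    induction e with
    | _ a b => exact ⟨a, Sym2.mem_mk_left a b, Sym2.mem_mk_left a b⟩
  have hle : (1 : ℤ) ≤ ((closedNbhd G e).card : ℤ) := by
    have := Finset.card_pos.mpr ⟨e, hmem⟩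
    omega
  calc (1 : ℤ) ≤ ((closedNbhd G e).card : ℤ) := hle
  _ = _ := by rw [Finset.sum_const, nsmul_eq_mul, mul_one]

lemma gammaS_set_bddBelow {V : Type*} [Fintype V] (G : SimpleGraph V) :
    BddBelow {z : ℤ | ∃ f, IsSEDF G f ∧ z = ∑ e ∈ edgeFin G, f e} := by
  refine ⟨-((edgeFin G).card : ℤ), ?_⟩
  rintro z ⟨f, hf, rfl⟩
  calc -((edgeFin G).card : ℤ) = ∑ _e ∈ edgeFin G, (-1 : ℤ) := by
        rw [Finset.sum_const, nsmul_eq_mul]; ring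
  _ ≤ _ := Finset.sum_le_sum (fun x hx => by rcases hf.1 x hx with h | h <;> omega)

lemma gammaS_set_nonempty {V : Type*} [Fintype V] (G : SimpleGraph V) :
    {z : ℤ | ∃ f, IsSEDF G f ∧ z = ∑ e ∈ edgeFin G, f e}.Nonempty :=
  ⟨_, (fun _ => 1), one_sedf G, rfl⟩

lemma gammaS_mem {V : Type*} [Fintype V] (G : SimpleGraph V) :
    ∃ f, IsSEDF G f ∧ gammaS G = ∑ e ∈ edgeFin G, f e :=
  Int.csInf_mem (gammaS_set_nonempty G) (gammaS_set_bddBelow G)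

lemma gammaS_le {V : Type*} [Fintype V] (G : SimpleGraph V) (f : Sym2 V → ℤ)
    (hf : IsSEDF G f) : gammaS G ≤ ∑ e ∈ edgeFin G, f e :=
  csInf_le (gammaS_set_bddBelow G) ⟨f, hf, rfl⟩

lemma gammaS_lb (G : SimpleGraph (Fin k)) : -(k : ℤ)^2 ≤ 16 * gammaS G := by
  obtain ⟨f, hf, hEq⟩ := gammaS_mem G
  rw [hEq]
  exact lb G f hf

lemma g_set_bddBelow :
    BddBelow {z : ℤ | ∃ G : SimpleGraph (Fin k), z = gammaS G} := by
  refine ⟨-(k : ℤ)^2, ?_⟩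
  rintro z ⟨G, rfl⟩
  have h := gammaS_lb G
  have hk2 : (0 : ℤ) ≤ (k : ℤ)^2 := by positivity
  omega

lemma g_mem : ∃ G : SimpleGraph (Fin k), g k = gammaS G := by
  have h := Int.csInf_mem (s := {z : ℤ | ∃ G : SimpleGraph (Fin k), z = gammaS G})
    ⟨gammaS (⊥ : SimpleGraph (Fin k)), ⟨(⊥ : SimpleGraph (Fin k)), rfl⟩⟩ g_set_bddBelow
  exact h

lemma g_lb : -(k : ℤ)^2 ≤ 16 * g k := by
  obtain ⟨G, hG⟩ := g_mem (k := k)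
  rw [hG]
  exact gammaS_lb G

lemma g_le (G : SimpleGraph (Fin k)) : g k ≤ gammaS G :=
  csInf_le g_set_bddBelow ⟨G, rfl⟩

lemma g_ub (hk : 12 ≤ k) :
    ∃ m : ℕ, 1 ≤ m ∧ 9 * m + 3 ≤ k ∧ k ≤ 9 * m + 11 ∧
      2 * g k ≤ -((3 * m + 1 : ℤ) * m) := by
  set m : ℕ := (k - 3) / 9 with hm
  have hfacts : 1 ≤ m ∧ 9 * m + 3 ≤ k ∧ k ≤ 9 * m + 11 := by omega
  refine ⟨m, hfacts.1, hfacts.2.1, hfacts.2.2, ?_⟩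
  set r : ℕ := k - (9 * m + 3) with hr
  have hcard : Fintype.card (W m r) = k := by
    simp only [W, Fintype.card_sum, Fintype.card_prod, Fintype.card_fin, ZMod.card]
    unfold Nn
    omega
  let eqv : W m r ≃ Fin k := Fintype.equivFinOfCardEq hcard
  obtain ⟨hsedf, hsum⟩ := sedf_map eqv (Gm m r) (fW m r) (sedf_Gm m r hfacts.1)
  have h1 : g k ≤ ∑ x ∈ edgeFin ((Gm m r).map eqv.toEmbedding),
      fW m r (Sym2.map ⇑eqv.symm x) :=
    le_trans (g_le _) (gammaS_le _ _ hsedf)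
  have h2 := total_sum m r
  rw [hsum] at h1
  have hN : (Nn m : ℤ) = 3 * m + 1 := by unfold Nn; push_cast; ring
  rw [hN] at h2
  omega

end Glue

theorem stmt12 (k : ℕ) (hk : 12 ≤ k) :
    -((k : ℚ) ^ 2) / 16 ≤ (g k : ℚ) ∧ (g k : ℚ) ≤ -(((k : ℚ) - 8) ^ 2) / 72 := by
  constructor
  · have h := g_lb (k := k)
    have h' : -((k : ℚ))^2 ≤ 16 * (g k : ℚ) := by exact_mod_cast h
    rw [div_le_iff₀ (by norm_num : (0:ℚ) < 16)]
    linarith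
  · obtain ⟨m, hm1, hml, hmu, hsum⟩ := g_ub hk
    have hgQ : 2 * (g k : ℚ) ≤ -((3 * (m:ℚ) + 1) * m) := by exact_mod_cast hsum
    have hkQ : (k : ℚ) ≤ 9 * m + 11 := by exact_mod_cast hmu
    have hkQ' : (9 : ℚ) * m + 3 ≤ k := by exact_mod_cast hml
    have hmQ : (1 : ℚ) ≤ m := by exact_mod_cast hm1
    rw [le_div_iff₀ (by norm_num : (0:ℚ) < 72)]
    nlinarith [sq_nonneg ((k:ℚ) - 8 - (9*m + 3)), sq_nonneg ((m:ℚ) - 1),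
      mul_nonneg (sub_nonneg.mpr hmQ) (sub_nonneg.mpr hmQ)]
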